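/- Let f : ℝⁿ → ℝ be shift-invariant, let g : ℝ → ℝ and D : ℝ → ℝ be arbitrary functions, let w₁, …, wₙ be real weights, and define the penalty P(x, y) = Σ_{i=1}^{n} wᵢ · g(|xᵢ − f(x)|) · D(xᵢ − y). Then for every a ∈ ℝ and every x ∈ ℝⁿ, a real number μ minimizes y ↦ P(x, y) if and only if μ + a minimizes y ↦ P(x + a·𝟙, y). In particular this applies to the generalised spatial-tonal filters obtained with D(t) = t², and any function returning the infimum of the minimizers is shift-invariant. -/

import Mathlib

/-- For a shift-invariant `f`, arbitrary `g`, `D`, weights `w`, and the penalty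
`P(x, y) = Σᵢ wᵢ · g(|xᵢ − f(x)|) · D(xᵢ − y)`, a value `μ` minimizes `y ↦ P(x, y)` iff
`μ + a` minimizes `y ↦ P(x + a·𝟙, y)` (this covers the generalised spatial-tonal filters,
obtained with `D(t) = t²`); consequently the function returning the infimum of the
minimizers is shift-invariant. -/
theorem spatial_tonal_penalty_shift_invariant {n : ℕ} (f : (Fin n → ℝ) → ℝ)
    (hf : ∀ (x : Fin n → ℝ) (a : ℝ), f (fun i => x i + a) = f x + a)
    (g D : ℝ → ℝ) (w : Fin n → ℝ)
    (P : (Fin n → ℝ) → ℝ → ℝ)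
    (hP : ∀ (x : Fin n → ℝ) (y : ℝ),
      P x y = ∑ i, w i * g |x i - f x| * D (x i - y)) :
    (∀ (a : ℝ) (x : Fin n → ℝ) (μ : ℝ),
      (∀ y, P x μ ≤ P x y) ↔
        (∀ y, P (fun i => x i + a) (μ + a) ≤ P (fun i => x i + a) y)) ∧
    (∀ (a : ℝ) (x : Fin n → ℝ),
      {μ : ℝ | ∀ y, P x μ ≤ P x y}.Nonempty →
      BddBelow {μ : ℝ | ∀ y, P x μ ≤ P x y} →
      sInf {μ : ℝ | ∀ y, P (fun i => x i + a) μ ≤ P (fun i => x i + a) y} =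
        sInf {μ : ℝ | ∀ y, P x μ ≤ P x y} + a) := by
  have key : ∀ (a : ℝ) (x : Fin n → ℝ) (y : ℝ),
      P (fun i => x i + a) y = P x (y - a) := by
    intro a x y
    rw [hP, hP, hf]
    refine Finset.sum_congr rfl fun i _ => ?_
    have h1 : x i + a - (f x + a) = x i - f x := by ring
    have h2 : x i + a - y = x i - (y - a) := by ring
    rw [h1, h2]
  have main : ∀ (a : ℝ) (x : Fin n → ℝ) (μ : ℝ),
      (∀ y, P x μ ≤ P x y) ↔
        (∀ y, P (fun i => x i + a) (μ + a) ≤ P (fun i => x i + a) y) := by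
    intro a x μ
    constructor
    · intro h y
      rw [key, key]
      simpa using h (y - a)
    · intro h y
      have := h (y + a)
      rw [key, key] at this
      simpa using this
  refine ⟨main, fun a x hne hbd => ?_⟩
  have hset : {μ : ℝ | ∀ y, P (fun i => x i + a) μ ≤ P (fun i => x i + a) y} =
      (fun μ => μ + a) '' {μ : ℝ | ∀ y, P x μ ≤ P x y} := by
    ext μ
    simp only [Set.mem_setOf_eq, Set.mem_image]
    constructor
    · intro h
      refine ⟨μ - a, ?_, by ring⟩
      have := (main a x (μ - a)).mpr
      simp only [sub_add_cancel] at this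
      exact this h
    · rintro ⟨ν, hν, rfl⟩
      exact (main a x ν).mp hν
  rw [hset]
  set S := {μ : ℝ | ∀ y, P x μ ≤ P x y}
  have hne' : ((fun μ : ℝ => μ + a) '' S).Nonempty := hne.image _
  have hbd' : BddBelow ((fun μ : ℝ => μ + a) '' S) := by
    obtain ⟨b, hb⟩ := hbd
    exact ⟨b + a, by rintro _ ⟨μ, hμ, rfl⟩; exact add_le_add_left (hb hμ) a⟩
  apply le_antisymm
  · have : sInf ((fun μ : ℝ => μ + a) '' S) - a ∈ lowerBounds S := by
      intro μ hμ
      have := csInf_le hbd' ⟨μ, hμ, rfl⟩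
      simp only at this
      linarith
    have := le_csInf hne this
    linarith
  · refine le_csInf hne' ?_
    rintro _ ⟨μ, hμ, rfl⟩
    exact add_le_add_left (csInf_le hbd hμ) a
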